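/- arXiv:1008.3216 — 2 statements merged into one kernel-verified Lean document; each statement's English description precedes it below -/
import Mathlib

section
/- Let G be a finite simple graph, let M be a maximum matching of G with |M| = m, let t be the number of isolated vertices of G, and let k be the number of bad vertices of G with respect to M. Then G has a total cover (S_V, S_E) with |S_V| + |S_E| = m + k + t. -/
open SimpleGraph

/-- A total cover of a simple graph `G`: a pair of a vertex set `SV` and an edge set
`SE ⊆ E(G)` such that every vertex not in `SV` is adjacent to a vertex of `SV` or is an
endpoint of an edge of `SE`, and every edge not in `SE` has an endpoint in `SV` or shares
an endpoint with an edge of `SE`. -/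
def IsTotalCover {V : Type*} (G : SimpleGraph V) (SV : Set V) (SE : Set (Sym2 V)) : Prop :=
  SE ⊆ G.edgeSet ∧
  (∀ v : V, v ∉ SV → (∃ u ∈ SV, G.Adj v u) ∨ (∃ e ∈ SE, v ∈ e)) ∧
  (∀ e ∈ G.edgeSet, e ∉ SE → (∃ v ∈ SV, v ∈ e) ∨ (∃ f ∈ SE, ∃ v : V, v ∈ e ∧ v ∈ f))

/-- A matching of `G`: a set of edges of `G` that are pairwise vertex-disjoint. -/
def IsMatchingSet {V : Type*} (G : SimpleGraph V) (M : Set (Sym2 V)) : Prop :=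
  M ⊆ G.edgeSet ∧ ∀ e ∈ M, ∀ f ∈ M, e ≠ f → ∀ v : V, v ∈ e → v ∉ f

/-- A maximum matching of `G`: a matching of largest cardinality. -/
def IsMaximumMatching {V : Type*} (G : SimpleGraph V) (M : Set (Sym2 V)) : Prop :=
  IsMatchingSet G M ∧ ∀ M' : Set (Sym2 V), IsMatchingSet G M' → M'.ncard ≤ M.ncard

/-- A vertex is covered by a matching `M` if it is an endpoint of some edge of `M`. -/
def CoveredBy {V : Type*} (M : Set (Sym2 V)) (v : V) : Prop :=
  ∃ e ∈ M, v ∈ e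

/-- A bad vertex with respect to a matching `M`: a vertex not covered by `M` which is
adjacent to both endpoints of some edge of `M`. -/
def IsBad {V : Type*} (G : SimpleGraph V) (M : Set (Sym2 V)) (w : V) : Prop :=
  ¬ CoveredBy M w ∧ ∃ u v : V, s(u, v) ∈ M ∧ G.Adj w u ∧ G.Adj w v

/-- An isolated vertex: a vertex of degree 0, i.e. adjacent to no vertex. -/
def IsIsolated {V : Type*} (G : SimpleGraph V) (v : V) : Prop :=
  ∀ u : V, ¬ G.Adj v u

/-- The total graph `T(G)` of `G`: its vertices are the vertices and edges of `G`, with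
adjacency given by adjacency/incidence in `G`. -/
def totalGraph {V : Type*} (G : SimpleGraph V) : SimpleGraph (V ⊕ G.edgeSet) where
  Adj x y :=
    match x, y with
    | .inl a, .inl b => G.Adj a b
    | .inl a, .inr e => a ∈ e.1
    | .inr e, .inl a => a ∈ e.1
    | .inr e, .inr f => e ≠ f ∧ ∃ v : V, v ∈ e.1 ∧ v ∈ f.1
  symm := by
    refine ⟨?_⟩
    rintro (a | e) (b | f) h
    · exact G.symm.symm _ _ h
    · exact h
    · exact h
    · exact ⟨h.1.symm, by obtain ⟨v, h1, h2⟩ := h.2; exact ⟨v, h2, h1⟩⟩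
  loopless := by
    refine ⟨?_⟩
    rintro (a | e) h
    · exact G.loopless.irrefl a h
    · exact h.1 rfl

lemma matching_subset {V : Type*} {G : SimpleGraph V} {M M' : Set (Sym2 V)}
    (h : M' ⊆ M) (hM : IsMatchingSet G M) : IsMatchingSet G M' :=
  ⟨fun e he => hM.1 (h he), fun e he f hf => hM.2 e (h he) f (h hf)⟩

lemma matching_insert {V : Type*} {G : SimpleGraph V} {M : Set (Sym2 V)}
    (hM : IsMatchingSet G M) {a b : V} (hab : G.Adj a b)
    (ha : ∀ e ∈ M, a ∉ e) (hb : ∀ e ∈ M, b ∉ e) :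
    IsMatchingSet G (insert s(a,b) M) := by
  obtain ⟨hsub, hdisj⟩ := hM
  constructor
  · intro e he
    rcases Set.mem_insert_iff.mp he with rfl | he
    · exact hab
    · exact hsub he
  · intro e he f hf hef v hv
    rcases Set.mem_insert_iff.mp he with he1 | he1
    · rcases Set.mem_insert_iff.mp hf with hf1 | hf1
      · exact absurd (he1.trans hf1.symm) hef
      · rw [he1] at hv
        rcases Sym2.mem_iff.mp hv with rfl | rfl
        · exact ha f hf1
        · exact hb f hf1
    · rcases Set.mem_insert_iff.mp hf with hf1 | hf1
      · rw [hf1]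
        intro hvf
        rcases Sym2.mem_iff.mp hvf with h2 | h2
        · exact ha e he1 (h2 ▸ hv)
        · exact hb e he1 (h2 ▸ hv)
      · exact hdisj e he1 f hf1 hef v hv

lemma totalCover_mono {V : Type*} {G : SimpleGraph V} {SV SV' : Set V} {SE : Set (Sym2 V)}
    (h : IsTotalCover G SV SE) (hsub : SV ⊆ SV') : IsTotalCover G SV' SE := by
  obtain ⟨h1, h2, h3⟩ := h
  refine ⟨h1, fun v hv => ?_, fun e he hse => ?_⟩
  · rcases h2 v (fun hh => hv (hsub hh)) with ⟨u, hu, hadj⟩ | h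
    · exact Or.inl ⟨u, hsub hu, hadj⟩
    · exact Or.inr h
  · rcases h3 e he hse with ⟨v, hv, hve⟩ | h
    · exact Or.inl ⟨v, hsub hv, hve⟩
    · exact Or.inr h

/-- with `M` a maximum matching of size `m`, `t` the number of isolated
vertices and `k` the number of bad vertices, `G` has a total cover of size `m + k + t`. -/
theorem stmt_1 {V : Type*} [Fintype V] (G : SimpleGraph V)
    (M : Set (Sym2 V)) (hM : IsMaximumMatching G M)
    (m t k : ℕ)
    (hm : M.ncard = m)
    (ht : {v : V | _root_.IsIsolated G v}.ncard = t)
    (hk : {w : V | IsBad G M w}.ncard = k) :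
    ∃ (SV : Set V) (SE : Set (Sym2 V)),
      IsTotalCover G SV SE ∧ SV.ncard + SE.ncard = m + k + t := by
  classical
  obtain ⟨⟨hMsub, hMdisj⟩, hMmax⟩ := hM
  have too_big : ∀ M' : Set (Sym2 V), IsMatchingSet G M' → M.ncard < M'.ncard → False :=
    fun M' h hlt => absurd (hMmax M' h) (not_le.mpr hlt)
  -- L1 : no edge with both endpoints uncovered
  have L1 : ∀ a b : V, G.Adj a b → ¬ CoveredBy M a → CoveredBy M b := by
    intro a b hab hca
    by_contra hcb
    have hanot : ∀ e ∈ M, a ∉ e := fun e he hv => hca ⟨e, he, hv⟩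
    have hbnot : ∀ e ∈ M, b ∉ e := fun e he hv => hcb ⟨e, he, hv⟩
    have hmem : s(a,b) ∉ M := fun h => hca ⟨_, h, Sym2.mem_mk_left a b⟩
    apply too_big _ (matching_insert ⟨hMsub, hMdisj⟩ hab hanot hbnot)
    rw [Set.ncard_insert_of_notMem hmem]
    omega
  -- the partner function
  obtain ⟨mu, hmuP⟩ : ∃ mu : V → V, ∀ v : V, CoveredBy M v → s(v, mu v) ∈ M := by
    refine ⟨fun v => if h : ∃ u, s(v, u) ∈ M then h.choose else v, fun v hv => ?_⟩
    have h : ∃ u, s(v, u) ∈ M := by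
      obtain ⟨e, he, hve⟩ := hv
      obtain ⟨u, rfl⟩ := Sym2.mem_iff_exists.mp hve
      exact ⟨u, he⟩
    simp only [dif_pos h]
    exact h.choose_spec
  have hmuAdj : ∀ v, CoveredBy M v → G.Adj v (mu v) := fun v hv => hMsub (hmuP v hv)
  have hmuCov : ∀ v, CoveredBy M v → CoveredBy M (mu v) :=
    fun v hv => ⟨_, hmuP v hv, Sym2.mem_mk_right _ _⟩
  have hpart : ∀ v u, s(v,u) ∈ M → u = mu v := by
    intro v u h
    have hc : CoveredBy M v := ⟨_, h, Sym2.mem_mk_left _ _⟩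
    have h2 := hmuP v hc
    by_contra hne
    have hne2 : s(v,u) ≠ s(v, mu v) := fun hh => hne (Sym2.congr_right.mp hh)
    exact hMdisj _ h _ h2 hne2 v (Sym2.mem_mk_left _ _) (Sym2.mem_mk_left _ _)
  have hedgeEq : ∀ v e, e ∈ M → v ∈ e → e = s(v, mu v) := by
    intro v e he hve
    obtain ⟨u, rfl⟩ := Sym2.mem_iff_exists.mp hve
    rw [hpart v u he]
  have hmumu : ∀ v, CoveredBy M v → mu (mu v) = v := by
    intro v hv
    have h2 := hmuP v hv
    rw [Sym2.eq_swap] at h2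
    exact (hpart (mu v) v h2).symm
  -- for e ∈ M \ {s(u,v)} with s(u,v) ∈ M, members of s(u,v) are not in e
  have hdisj' : ∀ u v : V, s(u,v) ∈ M → ∀ x, x ∈ s(u,v) → ∀ e ∈ M \ {s(u,v)}, x ∉ e := by
    intro u v huv x hx e he hxe
    exact hMdisj _ huv _ he.1 (fun hh => he.2 (Set.mem_singleton_iff.mpr hh.symm)) x hx hxe
  -- L2 : Fact A engine
  have L2 : ∀ u v w w' : V, s(u,v) ∈ M → ¬CoveredBy M w → ¬CoveredBy M w' →
      ¬IsBad G M w → G.Adj w u → G.Adj w' v → False := by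
    intro u v w w' huv hw hw' hbad hwu hw'v
    by_cases hww' : w = w'
    · subst hww'
      exact hbad ⟨hw, u, v, huv, hwu, hw'v⟩
    · set M0 : Set (Sym2 V) := M \ {s(u,v)} with hM0d
      have hM0m : IsMatchingSet G M0 := matching_subset Set.diff_subset ⟨hMsub, hMdisj⟩
      have hCovu : CoveredBy M u := ⟨_, huv, Sym2.mem_mk_left _ _⟩
      have hCovv : CoveredBy M v := ⟨_, huv, Sym2.mem_mk_right _ _⟩
      have hwnot : ∀ e ∈ M0, w ∉ e := fun e he hv => hw ⟨e, he.1, hv⟩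
      have hw'not : ∀ e ∈ M0, w' ∉ e := fun e he hv => hw' ⟨e, he.1, hv⟩
      have hM1m := matching_insert hM0m hw'v hw'not
        (fun e he => hdisj' u v huv v (Sym2.mem_mk_right _ _) e he)
      set M1 : Set (Sym2 V) := insert s(w', v) M0 with hM1d
      have hwnot1 : ∀ e ∈ M1, w ∉ e := by
        intro e he hv
        rcases Set.mem_insert_iff.mp he with he1 | he1
        · rw [he1] at hv
          rcases Sym2.mem_iff.mp hv with h | h
          · exact hww' h
          · apply hw; rw [h]; exact hCovv
        · exact hwnot e he1 hv
      have hunot1 : ∀ e ∈ M1, u ∉ e := by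
        intro e he hv
        rcases Set.mem_insert_iff.mp he with he1 | he1
        · rw [he1] at hv
          rcases Sym2.mem_iff.mp hv with h | h
          · apply hw'; rw [← h]; exact hCovu
          · exact (hMsub huv).ne h
        · exact hdisj' u v huv u (Sym2.mem_mk_left _ _) e he1 hv
      have hM2m := matching_insert hM1m hwu hwnot1 hunot1
      have h0 : M0.ncard + 1 = M.ncard := Set.ncard_diff_singleton_add_one huv
      have hn1 : s(w', v) ∉ M0 := fun h => hw' ⟨_, h.1, Sym2.mem_mk_left _ _⟩
      have hn2 : s(w, u) ∉ M1 := fun h => hwnot1 _ h (Sym2.mem_mk_left _ _)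
      apply too_big _ hM2m
      rw [Set.ncard_insert_of_notMem hn2, hM1d, Set.ncard_insert_of_notMem hn1]
      omega
  -- L3 : Fact B engine
  have L3 : ∀ a b w w' : V, G.Adj a b → CoveredBy M a → CoveredBy M b → b ≠ mu a →
      ¬CoveredBy M w → ¬CoveredBy M w' → w ≠ w' →
      G.Adj w (mu a) → G.Adj w' (mu b) → False := by
    intro a b w w' hab hca hcb hbna hw hw' hww' hwa hw'b
    have hea := hmuP a hca
    have heb := hmuP b hcb
    have heab : s(a, mu a) ≠ s(b, mu b) := by
      intro hh
      rcases Sym2.eq_iff.mp hh with ⟨h1, _⟩ | ⟨_, h2⟩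
      · exact hab.ne h1
      · exact hbna h2.symm
    -- basic distinctness facts
    have hanb' : a ≠ mu b := by
      intro hh
      exact hdisj' b (mu b) heb a (by rw [hh]; exact Sym2.mem_mk_right _ _)
        (s(a, mu a)) ⟨hea, fun hc => heab (Set.mem_singleton_iff.mp hc)⟩ (Sym2.mem_mk_left _ _)
    have hmanb : mu a ≠ mu b := by
      intro hh
      exact hdisj' b (mu b) heb (mu a) (by rw [hh]; exact Sym2.mem_mk_right _ _)
        (s(a, mu a)) ⟨hea, fun hc => heab (Set.mem_singleton_iff.mp hc)⟩ (Sym2.mem_mk_right _ _)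
    set M0 : Set (Sym2 V) := (M \ {s(a, mu a)}) \ {s(b, mu b)} with hM0d
    have hM0sub : M0 ⊆ M := fun e he => he.1.1
    have hM0m : IsMatchingSet G M0 :=
      matching_subset (Set.diff_subset.trans Set.diff_subset) ⟨hMsub, hMdisj⟩
    have hAnot : ∀ x, x ∈ s(a, mu a) → ∀ e ∈ M0, x ∉ e := by
      intro x hx e he
      exact hdisj' a (mu a) hea x hx e ⟨he.1.1, he.1.2⟩
    have hBnot : ∀ x, x ∈ s(b, mu b) → ∀ e ∈ M0, x ∉ e := by
      intro x hx e he
      exact hdisj' b (mu b) heb x hx e ⟨he.1.1, he.2⟩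
    have hwnot : ∀ e ∈ M0, w ∉ e := fun e he hv => hw ⟨e, hM0sub he, hv⟩
    have hw'not : ∀ e ∈ M0, w' ∉ e := fun e he hv => hw' ⟨e, hM0sub he, hv⟩
    -- M1 = insert s(w', mu b) M0
    have hM1m := matching_insert hM0m hw'b hw'not
      (fun e he => hBnot (mu b) (Sym2.mem_mk_right _ _) e he)
    set M1 : Set (Sym2 V) := insert s(w', mu b) M0 with hM1d
    have hanot1 : ∀ e ∈ M1, a ∉ e := by
      intro e he hv
      rcases Set.mem_insert_iff.mp he with he1 | he1
      · rw [he1] at hv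
        rcases Sym2.mem_iff.mp hv with h | h
        · apply hw'; rw [← h]; exact hca
        · exact hanb' h
      · exact hAnot a (Sym2.mem_mk_left _ _) e he1 hv
    have hbnot1 : ∀ e ∈ M1, b ∉ e := by
      intro e he hv
      rcases Set.mem_insert_iff.mp he with he1 | he1
      · rw [he1] at hv
        rcases Sym2.mem_iff.mp hv with h | h
        · apply hw'; rw [← h]; exact hcb
        · exact (hmuAdj b hcb).ne h
      · exact hBnot b (Sym2.mem_mk_left _ _) e he1 hv
    have hM2m := matching_insert hM1m hab hanot1 hbnot1
    set M2 : Set (Sym2 V) := insert s(a, b) M1 with hM2d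
    have hwnot2 : ∀ e ∈ M2, w ∉ e := by
      intro e he hv
      rcases Set.mem_insert_iff.mp he with he1 | he1
      · rw [he1] at hv
        rcases Sym2.mem_iff.mp hv with h | h
        · apply hw; rw [h]; exact hca
        · apply hw; rw [h]; exact hcb
      · rcases Set.mem_insert_iff.mp he1 with he2 | he2
        · rw [he2] at hv
          rcases Sym2.mem_iff.mp hv with h | h
          · exact hww' h
          · apply hw; rw [h]; exact hmuCov b hcb
        · exact hwnot e he2 hv
    have hmanot2 : ∀ e ∈ M2, mu a ∉ e := by
      intro e he hv
      rcases Set.mem_insert_iff.mp he with he1 | he1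
      · rw [he1] at hv
        rcases Sym2.mem_iff.mp hv with h | h
        · exact (hmuAdj a hca).ne h.symm
        · exact hbna h.symm
      · rcases Set.mem_insert_iff.mp he1 with he2 | he2
        · rw [he2] at hv
          rcases Sym2.mem_iff.mp hv with h | h
          · apply hw'; rw [← h]; exact hmuCov a hca
          · exact hmanb h
        · exact hAnot (mu a) (Sym2.mem_mk_right _ _) e he2 hv
    have hM3m := matching_insert hM2m hwa hwnot2 hmanot2
    -- cardinalities
    have hbM0' : s(b, mu b) ∈ M \ {s(a, mu a)} :=
      ⟨heb, fun hc => heab (Set.mem_singleton_iff.mp hc).symm⟩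
    have h0 : M0.ncard + 1 = (M \ {s(a, mu a)}).ncard :=
      Set.ncard_diff_singleton_add_one hbM0'
    have h0' : (M \ {s(a, mu a)}).ncard + 1 = M.ncard :=
      Set.ncard_diff_singleton_add_one hea
    have hn1 : s(w', mu b) ∉ M0 := fun h => hw' ⟨_, hM0sub h, Sym2.mem_mk_left _ _⟩
    have hn2 : s(a, b) ∉ M1 := fun h => hanot1 _ h (Sym2.mem_mk_left _ _)
    have hn3 : s(w, mu a) ∉ M2 := fun h => hwnot2 _ h (Sym2.mem_mk_left _ _)
    apply too_big _ hM3m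
    rw [Set.ncard_insert_of_notMem hn3, hM2d, Set.ncard_insert_of_notMem hn2, hM1d,
      Set.ncard_insert_of_notMem hn1]
    omega
  -- ===== construction =====
  have hIsoNotCov : ∀ v, _root_.IsIsolated G v → ¬CoveredBy M v := by
    intro v hiso hc
    exact hiso (mu v) (hmuAdj v hc)
  set U : V → Prop := fun w => ¬CoveredBy M w ∧ ¬IsBad G M w ∧ ¬_root_.IsIsolated G w with hUdef
  set D : V → Prop := fun u => CoveredBy M u ∧ ∃ w, U w ∧ G.Adj w u with hDdef
  set X2 : V → Prop := fun x => CoveredBy M x ∧ D (mu x) ∧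
    ∃ y, G.Adj x y ∧ CoveredBy M y ∧ D (mu y) ∧ y ≠ mu x with hX2def
  set D1 : V → Prop := fun u => D u ∧ ¬X2 (mu u) with hD1def
  set Q : V → Prop := fun w => U w ∧ ∀ u, G.Adj w u → ¬D1 u with hQdef
  obtain ⟨zeta, hzeta⟩ : ∃ z : V → V, ∀ w, ¬_root_.IsIsolated G w → G.Adj w (z w) := by
    refine ⟨fun w => if h : ∃ u, G.Adj w u then h.choose else w, fun w hw => ?_⟩
    have h : ∃ u, G.Adj w u := by
      by_contra hc; push_neg at hc; exact hw hc
    simp only [dif_pos h]; exact h.choose_spec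
  set A : Set V := {u | D1 u} ∪ zeta '' {w | Q w} with hAdef
  set SV : Set V := ({v | _root_.IsIsolated G v} ∪ {w | IsBad G M w}) ∪ A with hSVdef
  set SE : Set (Sym2 V) := {e | e ∈ M ∧ ∀ v ∈ e, v ∉ SV} with hSEdef
  have factA : ∀ u, D u → D (mu u) → False := by
    intro u hu hmu
    obtain ⟨hcov, w, hUw, hwu⟩ := hu
    obtain ⟨_, w', hUw', hw'mu⟩ := hmu
    exact L2 u (mu u) w w' (hmuP u hcov) hUw.1 hUw'.1 hUw.2.1 hwu hw'mu
  have hzetaQ : ∀ w, Q w → G.Adj w (zeta w) ∧ D (zeta w) ∧ ¬D1 (zeta w) := by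
    intro w hQw
    have hadj := hzeta w hQw.1.2.2
    have hcov : CoveredBy M (zeta w) := L1 w (zeta w) hadj hQw.1.1
    exact ⟨hadj, ⟨hcov, w, hQw.1, hadj⟩, hQw.2 _ hadj⟩
  have hSVcov : ∀ u, u ∈ SV → CoveredBy M u → D1 u ∨ ∃ w, Q w ∧ zeta w = u := by
    intro u hu hcov
    rcases hu with (hiso | hbad) | (hD1u | ⟨w, hQw, heq⟩)
    · exact absurd hcov (hIsoNotCov u hiso)
    · exact absurd hcov hbad.1
    · exact Or.inl hD1u
    · exact Or.inr ⟨w, hQw, heq⟩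
  -- ===== the cover property =====
  have hcover : IsTotalCover G SV SE := by
    refine ⟨fun e he => hMsub he.1, ?_, ?_⟩
    · -- vertex condition
      intro v hv
      by_cases hcov : CoveredBy M v
      · by_cases hse : s(v, mu v) ∈ SE
        · exact Or.inr ⟨_, hse, Sym2.mem_mk_left _ _⟩
        · have hex : ∃ x ∈ s(v, mu v), x ∈ SV := by
            by_contra hc; push_neg at hc
            exact hse ⟨hmuP v hcov, hc⟩
          obtain ⟨x, hxmem, hxSV⟩ := hex
          rcases Sym2.mem_iff.mp hxmem with h | h
          · exact absurd (h ▸ hxSV) hv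
          · exact Or.inl ⟨mu v, h ▸ hxSV, hmuAdj v hcov⟩
      · have hnb : ¬IsBad G M v := fun hb => hv (Or.inl (Or.inr hb))
        have hni : ¬_root_.IsIsolated G v := fun hb => hv (Or.inl (Or.inl hb))
        have hU : U v := ⟨hcov, hnb, hni⟩
        by_cases hq : ∃ u, G.Adj v u ∧ D1 u
        · obtain ⟨u, hadj, hD1u⟩ := hq
          exact Or.inl ⟨u, Or.inr (Or.inl hD1u), hadj⟩
        · have hQv : Q v := ⟨hU, fun u hu hd => hq ⟨u, hu, hd⟩⟩
          exact Or.inl ⟨zeta v, Or.inr (Or.inr ⟨v, hQv, rfl⟩), (hzetaQ v hQv).1⟩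
    · -- edge condition
      intro f hf hfse
      induction f with
      | _ a b =>
      have hab : G.Adj a b := (SimpleGraph.mem_edgeSet G).mp hf
      by_cases hfM : s(a,b) ∈ M
      · have hex : ∃ x ∈ s(a,b), x ∈ SV := by
          by_contra hc; push_neg at hc; exact hfse ⟨hfM, hc⟩
        obtain ⟨x, h1, h2⟩ := hex
        exact Or.inl ⟨x, h2, h1⟩
      · by_cases hsva : a ∈ SV
        · exact Or.inl ⟨a, hsva, Sym2.mem_mk_left _ _⟩
        by_cases hsvb : b ∈ SV
        · exact Or.inl ⟨b, hsvb, Sym2.mem_mk_right _ _⟩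
        have endpoint : ∀ c : V, c ∉ SV → CoveredBy M c →
            (s(c, mu c) ∈ SE) ∨ (mu c ∈ SV) := by
          intro c hc hcov
          by_cases hse : s(c, mu c) ∈ SE
          · exact Or.inl hse
          · have hex : ∃ x ∈ s(c, mu c), x ∈ SV := by
              by_contra hcc; push_neg at hcc; exact hse ⟨hmuP c hcov, hcc⟩
            obtain ⟨x, h1, h2⟩ := hex
            rcases Sym2.mem_iff.mp h1 with h | h
            · exact absurd (h ▸ h2) hc
            · exact Or.inr (h ▸ h2)
        have hDmu : ∀ c, CoveredBy M c → mu c ∈ SV → D (mu c) := by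
          intro c hcov hmuSV
          rcases hSVcov (mu c) hmuSV (hmuCov c hcov) with hd | ⟨w, hQw, heq⟩
          · exact hd.1
          · rw [← heq]; exact (hzetaQ w hQw).2.1
        have hcovb_of : ∀ c d, G.Adj c d → d ∉ SV → CoveredBy M c → mu c ∈ SV →
            CoveredBy M d := by
          intro c d hcd hd hcov hmuSV
          by_contra hdcov
          have hdni : ¬_root_.IsIsolated G d := fun hiso => hiso c hcd.symm
          have hdnb : ¬IsBad G M d := fun hb => hd (Or.inl (Or.inr hb))
          have hUd : U d := ⟨hdcov, hdnb, hdni⟩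
          have hDc : D c := ⟨hcov, d, hUd, hcd.symm⟩
          exact factA c hDc (hDmu c hcov hmuSV)
        by_cases hcova : CoveredBy M a
        · rcases endpoint a hsva hcova with hshare | hmuaSV
          · exact Or.inr ⟨_, hshare, a, Sym2.mem_mk_left _ _, Sym2.mem_mk_left _ _⟩
          · have hcovb : CoveredBy M b := hcovb_of a b hab hsvb hcova hmuaSV
            rcases endpoint b hsvb hcovb with hshare | hmubSV
            · exact Or.inr ⟨_, hshare, b, Sym2.mem_mk_right _ _, Sym2.mem_mk_left _ _⟩
            · exfalso
              have hDma : D (mu a) := hDmu a hcova hmuaSV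
              have hDmb : D (mu b) := hDmu b hcovb hmubSV
              have hbna : b ≠ mu a := fun h => hsvb (by rw [h]; exact hmuaSV)
              have hanb : a ≠ mu b := fun h => hsva (by rw [h]; exact hmubSV)
              rcases hSVcov (mu a) hmuaSV (hmuCov a hcova) with hd1a | ⟨w, hQw, hza⟩
              · apply hd1a.2
                rw [hmumu a hcova]
                exact ⟨hcova, hDma, b, hab, hcovb, hDmb, hbna⟩
              · rcases hSVcov (mu b) hmubSV (hmuCov b hcovb) with hd1b | ⟨w', hQw', hzb⟩
                · apply hd1b.2
                  rw [hmumu b hcovb]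
                  exact ⟨hcovb, hDmb, a, hab.symm, hcova, hDma, hanb⟩
                · have hwa : G.Adj w (mu a) := by rw [← hza]; exact (hzetaQ w hQw).1
                  have hw'b : G.Adj w' (mu b) := by rw [← hzb]; exact (hzetaQ w' hQw').1
                  have hww' : w = w' := by
                    by_contra hne
                    exact L3 a b w w' hab hcova hcovb hbna hQw.1.1 hQw'.1.1 hne hwa hw'b
                  have hmm : mu a = mu b := by rw [← hza, ← hzb, hww']
                  have heq : s(a, mu a) = s(b, mu b) := by
                    by_contra hne
                    exact hMdisj _ (hmuP a hcova) _ (hmuP b hcovb) hne (mu a)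
                      (Sym2.mem_mk_right _ _) (by rw [hmm]; exact Sym2.mem_mk_right _ _)
                  rcases Sym2.eq_iff.mp heq with ⟨h1, _⟩ | ⟨_, h2⟩
                  · exact hab.ne h1
                  · exact hbna h2.symm
        · have hcovb : CoveredBy M b := L1 a b hab hcova
          rcases endpoint b hsvb hcovb with hshare | hmubSV
          · exact Or.inr ⟨_, hshare, b, Sym2.mem_mk_right _ _, Sym2.mem_mk_left _ _⟩
          · exact absurd (hcovb_of b a hab.symm hsva hcovb hmubSV) hcova
  -- ===== size bound =====
  have hAD : ∀ u ∈ A, D u := by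
    rintro u (hd | ⟨w, hQw, rfl⟩)
    · exact hd.1
    · exact (hzetaQ w hQw).2.1
  have hASV : A ⊆ SV := Set.subset_union_right
  have himg_sub : (fun u => s(u, mu u)) '' A ⊆ M := by
    rintro e ⟨u, hu, rfl⟩; exact hmuP u (hAD u hu).1
  have hinj : Set.InjOn (fun u => s(u, mu u)) A := by
    intro u hu u' hu' he
    rcases Sym2.eq_iff.mp he with ⟨h1, _⟩ | ⟨h1, h2⟩
    · exact h1
    · exfalso
      apply factA u' (hAD u' hu')
      rw [← h1]; exact hAD u hu
  have hdisjAE : Disjoint ((fun u => s(u, mu u)) '' A) SE := by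
    rw [Set.disjoint_left]
    rintro e ⟨u, hu, rfl⟩ hse
    exact hse.2 u (Sym2.mem_mk_left _ _) (hASV hu)
  have hsize1 : A.ncard + SE.ncard ≤ m := by
    have h1 : ((fun u => s(u, mu u)) '' A).ncard = A.ncard := Set.ncard_image_of_injOn hinj
    have h2 := Set.ncard_union_eq hdisjAE
    have h3 : ((fun u => s(u, mu u)) '' A ∪ SE) ⊆ M :=
      Set.union_subset himg_sub (fun e he => he.1)
    calc A.ncard + SE.ncard = ((fun u => s(u, mu u)) '' A ∪ SE).ncard := by rw [h2, h1]
    _ ≤ M.ncard := Set.ncard_le_ncard h3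
    _ = m := hm
  have hsizeSV : SV.ncard ≤ t + k + A.ncard := by
    calc SV.ncard ≤ ({v | _root_.IsIsolated G v} ∪ {w | IsBad G M w}).ncard + A.ncard :=
        Set.ncard_union_le _ _
    _ ≤ ({v | _root_.IsIsolated G v}.ncard + {w | IsBad G M w}.ncard) + A.ncard :=
        add_le_add_left (Set.ncard_union_le _ _) _
    _ = t + k + A.ncard := by rw [ht, hk]
  have hsize : SV.ncard + SE.ncard ≤ m + k + t := by omega
  -- ===== m + k + t ≤ card V =====
  have hcardV : m + k + t ≤ Fintype.card V := by
    have hψmem : ∀ e : Sym2 V, e.out.1 ∈ e := fun e => Sym2.out_fst_mem e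
    have hinjψ : Set.InjOn (fun e : Sym2 V => e.out.1) M := by
      intro e he e' he' hee
      by_contra hne
      have hee' : e.out.1 = e'.out.1 := hee
      exact hMdisj e he e' he' hne e.out.1 (hψmem e) (by rw [hee']; exact hψmem e')
    have hd1 : Disjoint ((fun e : Sym2 V => e.out.1) '' M)
        ({w | IsBad G M w} ∪ {v | _root_.IsIsolated G v}) := by
      rw [Set.disjoint_left]
      rintro v ⟨e, he, rfl⟩ hv
      rcases hv with hb | hi
      · exact hb.1 ⟨e, he, hψmem e⟩
      · exact hIsoNotCov _ hi ⟨e, he, hψmem e⟩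
    have hd2 : Disjoint {w | IsBad G M w} {v | _root_.IsIsolated G v} := by
      rw [Set.disjoint_left]
      intro v hb hi
      obtain ⟨_, u, x, _, hadj, _⟩ := hb
      exact hi u hadj
    calc m + k + t
        = ((fun e : Sym2 V => e.out.1) '' M).ncard
          + ({w | IsBad G M w} ∪ {v | _root_.IsIsolated G v}).ncard := by
          rw [Set.ncard_union_eq hd2, Set.ncard_image_of_injOn hinjψ, hm, hk, ht]; ring
    _ = ((fun e : Sym2 V => e.out.1) '' M ∪ ({w | IsBad G M w} ∪ {v | _root_.IsIsolated G v})).ncard :=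
          (Set.ncard_union_eq hd1).symm
    _ ≤ (Set.univ : Set V).ncard := Set.ncard_le_ncard (Set.subset_univ _)
    _ = Fintype.card V := by rw [Set.ncard_univ, Nat.card_eq_fintype_card]
  -- ===== padding =====
  obtain ⟨T, hTsub, hTcard⟩ := Finset.exists_superset_card_eq
    (s := (Set.toFinite SV).toFinset) (n := m + k + t - SE.ncard)
    (by rw [← Set.ncard_eq_toFinset_card SV (Set.toFinite SV)]; omega)
    (by omega)
  refine ⟨(T : Set V), SE, totalCover_mono hcover ?_, ?_⟩
  · intro v hvSV
    exact hTsub ((Set.Finite.mem_toFinset _).mpr hvSV)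
  · rw [Set.ncard_coe_finset, hTcard]
    omega
end

section
/- Let G be a finite simple graph and M a maximum matching of G. Let T₁ = {w₁, u₁, v₁} and T₂ = {w₂, u₂, v₂} be bad triangles, where u₁v₁ ∈ M, u₂v₂ ∈ M, w₁ and w₂ are the respective bad vertices, and w₁ ≠ w₂. Then no edge of G has one endpoint in {w₁, u₁, v₁} and the other endpoint in {w₂, u₂, v₂}; in particular, no vertex or edge of G can cover an edge of T₁ and simultaneously an edge of T₂. -/
open SimpleGraph

section
variable {V : Type*} [Fintype V] {G : SimpleGraph V} {M : Set (Sym2 V)}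

omit [Fintype V] in
lemma uncov_not_mem {w : V} (hw : ¬ CoveredBy M w) {e : Sym2 V} (he : e ∈ M) : w ∉ e :=
  fun h => hw ⟨e, he, h⟩

lemma key1 (hM : IsMaximumMatching G M) {w₁ w₂ : V}
    (hw₁ : ¬ CoveredBy M w₁) (hw₂ : ¬ CoveredBy M w₂)
    (hadj : G.Adj w₁ w₂) : False := by
  set M' : Set (Sym2 V) := insert s(w₁, w₂) M with hM'
  have hmem : s(w₁, w₂) ∉ M := fun h => hw₁ ⟨_, h, by simp⟩
  have hmatch : IsMatchingSet G M' := by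
    constructor
    · rintro f (rfl | hf)
      · exact G.mem_edgeSet.mpr hadj
      · exact hM.1.1 hf
    · rintro e (rfl | he) f (rfl | hf) hef x hxe hxf
      · exact hef rfl
      · rw [Sym2.mem_iff] at hxe
        rcases hxe with rfl | rfl
        · exact uncov_not_mem hw₁ hf hxf
        · exact uncov_not_mem hw₂ hf hxf
      · rw [Sym2.mem_iff] at hxf
        rcases hxf with rfl | rfl
        · exact uncov_not_mem hw₁ he hxe
        · exact uncov_not_mem hw₂ he hxe
      · exact hM.1.2 e he f hf hef x hxe hxf
  have hcard : M'.ncard = M.ncard + 1 := Set.ncard_insert_of_notMem hmem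
  have := hM.2 M' hmatch
  omega

lemma key0 (hM : IsMaximumMatching G M) {w₁ w₂ u v : V}
    (hw₁ : ¬ CoveredBy M w₁) (hw₂ : ¬ CoveredBy M w₂) (hne : w₁ ≠ w₂)
    (h : s(u, v) ∈ M) (a1 : G.Adj w₁ u) (a2 : G.Adj w₂ v) : False := by
  have huv : u ≠ v := (G.mem_edgeSet.mp (hM.1.1 h)).ne
  have hw₁v : w₁ ≠ v := fun hh => hw₁ ⟨_, h, by simp [hh]⟩
  have hw₂u : w₂ ≠ u := fun hh => hw₂ ⟨_, h, by simp [hh]⟩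
  have hw₁u : w₁ ≠ u := a1.ne
  have hw₂v : w₂ ≠ v := a2.ne
  have hall : ∀ f, f ∈ M → f ≠ s(u, v) → ∀ y ∈ f, y ≠ w₁ ∧ y ≠ w₂ ∧ y ≠ u ∧ y ≠ v := by
    intro f hf hfe y hy
    exact ⟨fun hh => uncov_not_mem hw₁ hf (hh ▸ hy),
      fun hh => uncov_not_mem hw₂ hf (hh ▸ hy),
      fun hh => hM.1.2 f hf _ h hfe y hy (by simp [hh]),
      fun hh => hM.1.2 f hf _ h hfe y hy (by simp [hh])⟩
  set D : Set (Sym2 V) := M \ {s(u, v)} with hD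
  have hDmem : ∀ f ∈ D, f ∈ M ∧ f ≠ s(u, v) := by
    intro f hf; exact ⟨hf.1, by simpa using hf.2⟩
  set M' : Set (Sym2 V) := insert s(w₁, u) (insert s(w₂, v) D) with hM'
  have hmatch : IsMatchingSet G M' := by
    constructor
    · rintro f (rfl | rfl | hf)
      · exact G.mem_edgeSet.mpr a1
      · exact G.mem_edgeSet.mpr a2
      · exact hM.1.1 (hDmem f hf).1
    · rintro e he f hf hef x hxe hxf
      rcases he with rfl | rfl | he <;> rcases hf with rfl | rfl | hf
      · exact hef rfl
      · rw [Sym2.mem_iff] at hxe hxf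
        rcases hxe with rfl | rfl <;> rcases hxf with h' | h'
        · exact hne h'
        · exact hw₁v h'
        · exact hw₂u h'.symm
        · exact huv h'
      · obtain ⟨hf1, hf2⟩ := hDmem f hf
        obtain ⟨q1, _, q3, _⟩ := hall f hf1 hf2 x hxf
        rw [Sym2.mem_iff] at hxe; tauto
      · rw [Sym2.mem_iff] at hxe hxf
        rcases hxe with rfl | rfl <;> rcases hxf with h' | h'
        · exact hne h'.symm
        · exact hw₂u h'
        · exact hw₁v h'.symm
        · exact huv h'.symm
      · exact hef rfl
      · obtain ⟨hf1, hf2⟩ := hDmem f hf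
        obtain ⟨_, q2, _, q4⟩ := hall f hf1 hf2 x hxf
        rw [Sym2.mem_iff] at hxe; tauto
      · obtain ⟨he1, he2⟩ := hDmem e he
        obtain ⟨q1, _, q3, _⟩ := hall e he1 he2 x hxe
        rw [Sym2.mem_iff] at hxf; tauto
      · obtain ⟨he1, he2⟩ := hDmem e he
        obtain ⟨_, q2, _, q4⟩ := hall e he1 he2 x hxe
        rw [Sym2.mem_iff] at hxf; tauto
      · exact hM.1.2 e (hDmem e he).1 f (hDmem f hf).1 hef x hxe hxf
  have h0 : D.ncard + 1 = M.ncard := Set.ncard_diff_singleton_add_one h (Set.toFinite M)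
  have h1 : s(w₂, v) ∉ D := fun hh =>
    ((hall _ (hDmem _ hh).1 (hDmem _ hh).2 w₂ (by simp)).2.1) rfl
  have h2 : s(w₁, u) ∉ insert s(w₂, v) D := by
    rintro (hh | hh)
    · rw [Sym2.eq_iff] at hh; tauto
    · exact ((hall _ (hDmem _ hh).1 (hDmem _ hh).2 w₁ (by simp)).1) rfl
  have hcard : M'.ncard = D.ncard + 2 := by
    rw [hM', Set.ncard_insert_of_notMem h2, Set.ncard_insert_of_notMem h1]
  have := hM.2 M' hmatch
  omega


lemma key2 (hM : IsMaximumMatching G M) {w₁ w₂ u₁ v₁ u₂ v₂ : V}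
    (hw₁ : ¬ CoveredBy M w₁) (hw₂ : ¬ CoveredBy M w₂) (hne : w₁ ≠ w₂)
    (h₁ : s(u₁, v₁) ∈ M) (h₂ : s(u₂, v₂) ∈ M)
    (a1 : G.Adj w₁ v₁) (a2 : G.Adj w₂ v₂) (hadj : G.Adj u₁ u₂) : False := by
  -- the two matching edges are distinct
  have he12 : s(u₁, v₁) ≠ s(u₂, v₂) := by
    intro hh
    rw [Sym2.eq_iff] at hh
    rcases hh with ⟨rfl, rfl⟩ | ⟨rfl, rfl⟩
    · exact hadj.ne rfl
    · exact key0 hM hw₁ hw₂ hne (by rw [Sym2.eq_swap]; exact h₁) a1 a2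
  have huv₁ : u₁ ≠ v₁ := (G.mem_edgeSet.mp (hM.1.1 h₁)).ne
  have huv₂ : u₂ ≠ v₂ := (G.mem_edgeSet.mp (hM.1.1 h₂)).ne
  have h12 : ∀ y : V, y ∈ s(u₁, v₁) → y ∉ s(u₂, v₂) :=
    fun y => hM.1.2 _ h₁ _ h₂ he12 y
  have hu₁u₂ : u₁ ≠ u₂ := fun hh => h12 u₁ (by simp) (by simp [hh])
  have hu₁v₂ : u₁ ≠ v₂ := fun hh => h12 u₁ (by simp) (by simp [hh])
  have hv₁u₂ : v₁ ≠ u₂ := fun hh => h12 v₁ (by simp) (by simp [hh])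
  have hv₁v₂ : v₁ ≠ v₂ := fun hh => h12 v₁ (by simp) (by simp [hh])
  have hw₁u₁ : w₁ ≠ u₁ := fun hh => hw₁ ⟨_, h₁, by simp [hh]⟩
  have hw₁v₁ : w₁ ≠ v₁ := fun hh => hw₁ ⟨_, h₁, by simp [hh]⟩
  have hw₁u₂ : w₁ ≠ u₂ := fun hh => hw₁ ⟨_, h₂, by simp [hh]⟩
  have hw₁v₂ : w₁ ≠ v₂ := fun hh => hw₁ ⟨_, h₂, by simp [hh]⟩
  have hw₂u₁ : w₂ ≠ u₁ := fun hh => hw₂ ⟨_, h₁, by simp [hh]⟩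
  have hw₂v₁ : w₂ ≠ v₁ := fun hh => hw₂ ⟨_, h₁, by simp [hh]⟩
  have hw₂u₂ : w₂ ≠ u₂ := fun hh => hw₂ ⟨_, h₂, by simp [hh]⟩
  have hw₂v₂ : w₂ ≠ v₂ := fun hh => hw₂ ⟨_, h₂, by simp [hh]⟩
  set D : Set (Sym2 V) := M \ {s(u₁, v₁), s(u₂, v₂)} with hDdef
  have hDmem : ∀ f ∈ D, f ∈ M ∧ f ≠ s(u₁, v₁) ∧ f ≠ s(u₂, v₂) := by
    intro f hf
    refine ⟨hf.1, ?_, ?_⟩ <;> · intro hh; exact hf.2 (by simp [hh])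
  have hall : ∀ f ∈ D, ∀ y ∈ f,
      y ≠ w₁ ∧ y ≠ w₂ ∧ y ≠ u₁ ∧ y ≠ v₁ ∧ y ≠ u₂ ∧ y ≠ v₂ := by
    intro f hf y hy
    obtain ⟨hf1, hf2, hf3⟩ := hDmem f hf
    exact ⟨fun hh => uncov_not_mem hw₁ hf1 (hh ▸ hy),
      fun hh => uncov_not_mem hw₂ hf1 (hh ▸ hy),
      fun hh => hM.1.2 f hf1 _ h₁ hf2 y hy (by simp [hh]),
      fun hh => hM.1.2 f hf1 _ h₁ hf2 y hy (by simp [hh]),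
      fun hh => hM.1.2 f hf1 _ h₂ hf3 y hy (by simp [hh]),
      fun hh => hM.1.2 f hf1 _ h₂ hf3 y hy (by simp [hh])⟩
  set M' : Set (Sym2 V) :=
    insert s(w₁, v₁) (insert s(w₂, v₂) (insert s(u₁, u₂) D)) with hM'
  have hmatch : IsMatchingSet G M' := by
    constructor
    · rintro f (rfl | rfl | rfl | hf)
      · exact G.mem_edgeSet.mpr a1
      · exact G.mem_edgeSet.mpr a2
      · exact G.mem_edgeSet.mpr hadj
      · exact hM.1.1 (hDmem f hf).1
    · rintro e he f hf hef x hxe hxf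
      rcases he with rfl | rfl | rfl | he <;> rcases hf with rfl | rfl | rfl | hf
      · exact hef rfl
      · rw [Sym2.mem_iff] at hxe hxf
        rcases hxe with rfl | rfl <;> rcases hxf with h' | h'
        · exact hne h'
        · exact hw₁v₂ h'
        · exact hw₂v₁ h'.symm
        · exact hv₁v₂ h'
      · rw [Sym2.mem_iff] at hxe hxf
        rcases hxe with rfl | rfl <;> rcases hxf with h' | h'
        · exact hw₁u₁ h'
        · exact hw₁u₂ h'
        · exact huv₁ h'.symm
        · exact hv₁u₂ h'
      · obtain ⟨q1, _, _, q4, _, _⟩ := hall f hf x hxf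
        rw [Sym2.mem_iff] at hxe; tauto
      · rw [Sym2.mem_iff] at hxe hxf
        rcases hxe with rfl | rfl <;> rcases hxf with h' | h'
        · exact hne h'.symm
        · exact hw₂v₁ h'
        · exact hw₁v₂ h'.symm
        · exact hv₁v₂ h'.symm
      · exact hef rfl
      · rw [Sym2.mem_iff] at hxe hxf
        rcases hxe with rfl | rfl <;> rcases hxf with h' | h'
        · exact hw₂u₁ h'
        · exact hw₂u₂ h'
        · exact hu₁v₂ h'.symm
        · exact huv₂ h'.symm
      · obtain ⟨_, q2, _, _, _, q6⟩ := hall f hf x hxf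
        rw [Sym2.mem_iff] at hxe; tauto
      · rw [Sym2.mem_iff] at hxe hxf
        rcases hxe with rfl | rfl <;> rcases hxf with h' | h'
        · exact hw₁u₁ h'.symm
        · exact huv₁ h'
        · exact hw₁u₂ h'.symm
        · exact hv₁u₂ h'.symm
      · rw [Sym2.mem_iff] at hxe hxf
        rcases hxe with rfl | rfl <;> rcases hxf with h' | h'
        · exact hw₂u₁ h'.symm
        · exact hu₁v₂ h'
        · exact hw₂u₂ h'.symm
        · exact huv₂ h'
      · exact hef rfl
      · obtain ⟨_, _, q3, _, q5, _⟩ := hall f hf x hxf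
        rw [Sym2.mem_iff] at hxe; tauto
      · obtain ⟨q1, _, _, q4, _, _⟩ := hall e he x hxe
        rw [Sym2.mem_iff] at hxf; tauto
      · obtain ⟨_, q2, _, _, _, q6⟩ := hall e he x hxe
        rw [Sym2.mem_iff] at hxf; tauto
      · obtain ⟨_, _, q3, _, q5, _⟩ := hall e he x hxe
        rw [Sym2.mem_iff] at hxf; tauto
      · exact hM.1.2 e (hDmem e he).1 f (hDmem f hf).1 hef x hxe hxf
  have hD : D = (M \ {s(u₁, v₁)}) \ {s(u₂, v₂)} := by
    rw [Set.diff_diff, Set.singleton_union]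
  have h0 : (M \ {s(u₁, v₁)}).ncard + 1 = M.ncard :=
    Set.ncard_diff_singleton_add_one h₁ (Set.toFinite M)
  have h0' : D.ncard + 1 = (M \ {s(u₁, v₁)}).ncard := by
    rw [hD]
    exact Set.ncard_diff_singleton_add_one ⟨h₂, by simpa using he12.symm⟩
      (Set.toFinite _)
  have n1 : s(u₁, u₂) ∉ D := fun hh =>
    (hall _ hh u₁ (by simp)).2.2.1 rfl
  have n2 : s(w₂, v₂) ∉ insert s(u₁, u₂) D := by
    rintro (hh | hh)
    · rw [Sym2.eq_iff] at hh; tauto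
    · exact (hall _ hh w₂ (by simp)).2.1 rfl
  have n3 : s(w₁, v₁) ∉ insert s(w₂, v₂) (insert s(u₁, u₂) D) := by
    rintro (hh | hh | hh)
    · rw [Sym2.eq_iff] at hh; tauto
    · rw [Sym2.eq_iff] at hh; tauto
    · exact (hall _ hh w₁ (by simp)).1 rfl
  have hcard : M'.ncard = D.ncard + 3 := by
    rw [hM', Set.ncard_insert_of_notMem n3, Set.ncard_insert_of_notMem n2,
      Set.ncard_insert_of_notMem n1]
  have := hM.2 M' hmatch
  omega

end

/-- no edge of `G` joins the vertex sets of two bad triangles with distinct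
bad vertices. -/
theorem stmt_9 {V : Type*} [Fintype V] (G : SimpleGraph V)
    (M : Set (Sym2 V)) (hM : IsMaximumMatching G M)
    (w₁ u₁ v₁ w₂ u₂ v₂ : V)
    (h₁ : s(u₁, v₁) ∈ M) (hw₁ : ¬ CoveredBy M w₁)
    (hw₁u : G.Adj w₁ u₁) (hw₁v : G.Adj w₁ v₁)
    (h₂ : s(u₂, v₂) ∈ M) (hw₂ : ¬ CoveredBy M w₂)
    (hw₂u : G.Adj w₂ u₂) (hw₂v : G.Adj w₂ v₂)
    (hne : w₁ ≠ w₂) :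
    ∀ a b : V, a ∈ ({w₁, u₁, v₁} : Set V) → b ∈ ({w₂, u₂, v₂} : Set V) →
      ¬ G.Adj a b := by
  intro a b ha hb hab
  rcases ha with rfl | rfl | rfl <;> rcases hb with rfl | rfl | rfl
  · exact key1 hM hw₁ hw₂ hab
  · exact key0 hM hw₁ hw₂ hne h₂ hab hw₂v
  · exact key0 hM hw₁ hw₂ hne (by rw [Sym2.eq_swap]; exact h₂) hab hw₂u
  · exact key0 hM hw₂ hw₁ hne.symm h₁ hab.symm hw₁v
  · exact key2 hM hw₁ hw₂ hne h₁ h₂ hw₁v hw₂v hab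
  · exact key2 hM hw₁ hw₂ hne h₁ (by rw [Sym2.eq_swap]; exact h₂) hw₁v hw₂u hab
  · exact key0 hM hw₂ hw₁ hne.symm (by rw [Sym2.eq_swap]; exact h₁) hab.symm hw₁u
  · exact key2 hM hw₁ hw₂ hne (by rw [Sym2.eq_swap]; exact h₁) h₂ hw₁u hw₂v hab
  · exact key2 hM hw₁ hw₂ hne (by rw [Sym2.eq_swap]; exact h₁) (by rw [Sym2.eq_swap]; exact h₂) hw₁u hw₂u hab
end
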